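/- Language compilation preserves the store-sequence abstraction: for every statement S, α_st(T_GP(S)) = α_st(T^ι(C(S))), where α_st maps a set of traces to the set of their store sequences, T_GP(S) is the set of partial traces of S under →_B starting at ⟨ρ,S⟩ for any store ρ, and T^ι(C(S)) is the set of partial traces of the compiled program C(S) starting at its initial label. -/

import Mathlib

/-- Guo–Palsberg statements: sequences of commands in continuation style. -/
inductive Stm (Exp BExp : Type) : Type
  | nil : Stm Exp BExp
  | skipC : Stm Exp BExp → Stm Exp BExp
  | assign : String → Exp → Stm Exp BExp → Stm Exp BExp
  | ite : BExp → Stm Exp BExp → Stm Exp BExp → Stm Exp BExp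
  | whileC : BExp → Stm Exp BExp → Stm Exp BExp → Stm Exp BExp
  | bail : BExp → Stm Exp BExp → Stm Exp BExp → Stm Exp BExp

/-- Concatenation of statements. -/
def Stm.app {Exp BExp : Type} : Stm Exp BExp → Stm Exp BExp → Stm Exp BExp
  | .nil, K => K
  | .skipC K', K => .skipC (K'.app K)
  | .assign x e K', K => .assign x e (K'.app K)
  | .ite b S K', K => .ite b S (K'.app K)
  | .whileC b S K', K => .whileC b S (K'.app K)
  | .bail b S K', K => .bail b S (K'.app K)

/-- The deterministic small-step operational semantics →_B of Guo–Palsberg. -/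
inductive StepB {Val Exp BExp : Type} (eval : Exp → (String → Val) → Val)
    (beval : BExp → (String → Val) → Bool) :
    (String → Val) × Stm Exp BExp → (String → Val) × Stm Exp BExp → Prop
  | skip (ρ : String → Val) (K : Stm Exp BExp) :
      StepB eval beval (ρ, .skipC K) (ρ, K)
  | assign (ρ : String → Val) (x : String) (e : Exp) (K : Stm Exp BExp) :
      StepB eval beval (ρ, .assign x e K) (Function.update ρ x (eval e ρ), K)
  | iteT (ρ : String → Val) (b : BExp) (S K : Stm Exp BExp) :
      beval b ρ = true → StepB eval beval (ρ, .ite b S K) (ρ, S.app K)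
  | iteF (ρ : String → Val) (b : BExp) (S K : Stm Exp BExp) :
      beval b ρ = false → StepB eval beval (ρ, .ite b S K) (ρ, K)
  | whileU (ρ : String → Val) (b : BExp) (S K : Stm Exp BExp) :
      StepB eval beval (ρ, .whileC b S K)
        (ρ, .ite b (S.app (.whileC b S .nil)) K)
  | bailT (ρ : String → Val) (b : BExp) (S K : Stm Exp BExp) :
      beval b ρ = true → StepB eval beval (ρ, .bail b S K) (ρ, S)
  | bailF (ρ : String → Val) (b : BExp) (S K : Stm Exp BExp) :
      beval b ρ = false → StepB eval beval (ρ, .bail b S K) (ρ, K)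

/-- Actions of the labeled-command target language. -/
inductive Act (Exp BExp : Type) : Type
  | skipA : Act Exp BExp
  | assignA : String → Exp → Act Exp BExp
  | testA : BExp → Bool → Act Exp BExp

/-- Labeled commands L : A → L'; labels are statements (via the injective
labeling l = id), with none playing the role of the undefined label ⊥. -/
structure Cmd (Exp BExp : Type) : Type where
  lbl : Stm Exp BExp
  act : Act Exp BExp
  suc : Option (Stm Exp BExp)

/-- Action semantics. -/
def Asem {Val Exp BExp : Type} (eval : Exp → (String → Val) → Val)
    (beval : BExp → (String → Val) → Bool) :
    Act Exp BExp → (String → Val) → Option (String → Val)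
  | .skipA, ρ => some ρ
  | .assignA x e, ρ => some (Function.update ρ x (eval e ρ))
  | .testA b pos, ρ => if beval b ρ = pos then some ρ else none

/-- The (generic) transition semantics of the labeled-command language. -/
def Strans {Val Exp BExp : Type} (eval : Exp → (String → Val) → Val)
    (beval : BExp → (String → Val) → Bool)
    (s s' : ((String → Val) × Cmd Exp BExp)) : Prop :=
  Asem eval beval s.2.act s.1 = some s'.1 ∧ s.2.suc = some s'.2.lbl

/-- The state compile function C^s, translating GP states to labeled-command
states (conditionals resolved by the truth value of the guard in the store). -/
def Cs {Val Exp BExp : Type} (eval : Exp → (String → Val) → Val)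
    (beval : BExp → (String → Val) → Bool) :
    (String → Val) × Stm Exp BExp → (String → Val) × Cmd Exp BExp
  | (ρ, .nil) => (ρ, ⟨.nil, .skipA, none⟩)
  | (ρ, .skipC K) => (ρ, ⟨.skipC K, .skipA, some K⟩)
  | (ρ, .assign x e K) => (ρ, ⟨.assign x e K, .assignA x e, some K⟩)
  | (ρ, .ite b S K) =>
      if beval b ρ then (ρ, ⟨.ite b S K, .testA b true, some (S.app K)⟩)
      else (ρ, ⟨.ite b S K, .testA b false, some K⟩)
  | (ρ, .whileC b S K) =>
      (ρ, ⟨.whileC b S K, .skipA, some (.ite b (S.app (.whileC b S .nil)) K)⟩)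
  | (ρ, .bail b S K) =>
      if beval b ρ then (ρ, ⟨.bail b S K, .testA b true, some S⟩)
      else (ρ, ⟨.bail b S K, .testA b false, some K⟩)

/-- The "first command(s)" compilation function 𝖢. -/
def CC {Exp BExp : Type} : Stm Exp BExp → Set (Cmd Exp BExp)
  | .nil => {⟨.nil, .skipA, none⟩}
  | .skipC K => {⟨.skipC K, .skipA, some K⟩}
  | .assign x e K => {⟨.assign x e K, .assignA x e, some K⟩}
  | .ite b S K =>
      {⟨.ite b S K, .testA b true, some (S.app K)⟩,
       ⟨.ite b S K, .testA b false, some K⟩}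
  | .whileC b S K =>
      {⟨.whileC b S K, .skipA, some (.ite b (S.app (.whileC b S .nil)) K)⟩}
  | .bail b S K =>
      {⟨.bail b S K, .testA b true, some S⟩,
       ⟨.bail b S K, .testA b false, some K⟩}

/-- The successor-statement relation underlying the recursive definition of the
full compilation function 𝒞. -/
inductive SuccStm {Exp BExp : Type} : Stm Exp BExp → Stm Exp BExp → Prop
  | skip (K : Stm Exp BExp) : SuccStm (.skipC K) K
  | assign (x : String) (e : Exp) (K : Stm Exp BExp) : SuccStm (.assign x e K) K
  | iteThen (b : BExp) (S K : Stm Exp BExp) : SuccStm (.ite b S K) (S.app K)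
  | iteElse (b : BExp) (S K : Stm Exp BExp) : SuccStm (.ite b S K) K
  | whileU (b : BExp) (S K : Stm Exp BExp) :
      SuccStm (.whileC b S K) (.ite b (S.app (.whileC b S .nil)) K)
  | bailTo (b : BExp) (S K : Stm Exp BExp) : SuccStm (.bail b S K) S
  | bailElse (b : BExp) (S K : Stm Exp BExp) : SuccStm (.bail b S K) K

/-- The full compilation function 𝒞: all first commands of statements reachable
through the recursive calls. -/
def compile {Exp BExp : Type} (S : Stm Exp BExp) : Set (Cmd Exp BExp) :=
  ⋃ S' ∈ {S' | Relation.ReflTransGen SuccStm S S'}, CC S'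

/-- T_GP(S): partial traces of S under →_B, starting at ⟨ρ,S⟩ for any store ρ. -/
def TGP {Val Exp BExp : Type} (eval : Exp → (String → Val) → Val)
    (beval : BExp → (String → Val) → Bool) (S : Stm Exp BExp) :
    Set (List ((String → Val) × Stm Exp BExp)) :=
  {τ | τ ≠ [] ∧ (∃ ρ : String → Val, τ.head? = some (ρ, S)) ∧
    τ.Chain' (StepB eval beval)}

/-- T^ι(P) at initial label L: partial traces of the program P ⊆ Cmd starting
at a state whose command is labeled L. -/
def Tiota {Val Exp BExp : Type} (eval : Exp → (String → Val) → Val)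
    (beval : BExp → (String → Val) → Bool) (P : Set (Cmd Exp BExp))
    (L : Stm Exp BExp) : Set (List ((String → Val) × Cmd Exp BExp)) :=
  {τ | τ ≠ [] ∧ (∀ s ∈ τ, s.2 ∈ P) ∧
    (∃ (ρ : String → Val) (C : Cmd Exp BExp), τ.head? = some (ρ, C) ∧ C.lbl = L) ∧
    τ.Chain' (Strans eval beval)}

section Aux

variable {Val Exp BExp : Type} (eval : Exp → (String → Val) → Val)
  (beval : BExp → (String → Val) → Bool)

lemma Cs_fst (s : (String → Val) × Stm Exp BExp) :
    (Cs eval beval s).1 = s.1 := by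
  obtain ⟨ρ, S⟩ := s
  cases S <;> simp only [Cs] <;> split <;> rfl

lemma Cs_lbl (s : (String → Val) × Stm Exp BExp) :
    (Cs eval beval s).2.lbl = s.2 := by
  obtain ⟨ρ, S⟩ := s
  cases S <;> simp only [Cs] <;> split <;> rfl

lemma stepB_strans {s s'} (h : StepB eval beval s s') :
    Strans eval beval (Cs eval beval s) (Cs eval beval s') := by
  unfold Strans
  rw [Cs_fst, Cs_fst, Cs_lbl]
  cases h <;> simp [Cs, Asem, *]

lemma Cs_mem (ρ : String → Val) (S : Stm Exp BExp) :
    (Cs eval beval (ρ, S)).2 ∈ CC S := by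
  cases S <;> simp only [Cs, CC] <;> try split
  all_goals simp

lemma lbl_of_mem_CC {C : Cmd Exp BExp} {L : Stm Exp BExp} (h : C ∈ CC L) :
    C.lbl = L := by
  cases L <;> simp only [CC, Set.mem_singleton_iff, Set.mem_insert_iff] at h <;>
    first
      | (subst h; rfl)
      | (rcases h with h | h <;> subst h <;> rfl)

lemma strans_stepB {L : Stm Exp BExp} {C C' : Cmd Exp BExp}
    {ρ ρ' : String → Val} (hC : C ∈ CC L)
    (h : Strans eval beval (ρ, C) (ρ', C')) :
    StepB eval beval (ρ, L) (ρ', C'.lbl) := by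
  obtain ⟨h1, h2⟩ := h
  cases L <;>
    simp only [CC, Set.mem_singleton_iff, Set.mem_insert_iff] at hC
  case nil => subst hC; simp at h2
  case skipC K =>
    subst hC
    simp only [Asem, Option.some.injEq] at h1 h2
    subst h1; rw [← h2]; exact StepB.skip _ _
  case assign x e K =>
    subst hC
    simp only [Asem, Option.some.injEq] at h1 h2
    subst h1; rw [← h2]; exact StepB.assign _ _ _ _
  case ite b S K =>
    rcases hC with rfl | rfl <;>
      simp only [Asem, Option.some.injEq, Option.ite_none_right_eq_some] at h1 h2 <;>
      obtain ⟨hb, rfl⟩ := h1 <;> rw [← h2]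
    · exact StepB.iteT _ _ _ _ hb
    · exact StepB.iteF _ _ _ _ hb
  case whileC b S K =>
    subst hC
    simp only [Asem, Option.some.injEq] at h1 h2
    subst h1; rw [← h2]; exact StepB.whileU _ _ _ _
  case bail b S K =>
    rcases hC with rfl | rfl <;>
      simp only [Asem, Option.some.injEq, Option.ite_none_right_eq_some] at h1 h2 <;>
      obtain ⟨hb, rfl⟩ := h1 <;> rw [← h2]
    · exact StepB.bailT _ _ _ _ hb
    · exact StepB.bailF _ _ _ _ hb

lemma stepB_succStm {s s'} (h : StepB eval beval s s') :
    SuccStm s.2 s'.2 := by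
  cases h <;> constructor

lemma chain_reach : ∀ (τ : List ((String → Val) × Stm Exp BExp))
    (ρ : String → Val) (S : Stm Exp BExp),
    τ.head? = some (ρ, S) → τ.Chain' (StepB eval beval) →
    ∀ s ∈ τ, Relation.ReflTransGen SuccStm S s.2
  | [], _, _, h, _, _, hs => by simp at h
  | [a], ρ, S, h, _, s, hs => by
      simp only [List.head?_cons, Option.some.injEq] at h
      simp only [List.mem_singleton] at hs
      subst hs; subst h; exact Relation.ReflTransGen.refl
  | a :: b :: l, ρ, S, h, hc, s, hs => by
      simp only [List.head?_cons, Option.some.injEq] at h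
      replace hc := List.isChain_cons_cons.mp hc
      obtain ⟨hab, hc⟩ := hc
      subst h
      rcases List.mem_cons.mp hs with rfl | hs
      · exact Relation.ReflTransGen.refl
      · have ih := chain_reach (b :: l) b.1 b.2 (by simp) hc s hs
        have h1 : SuccStm S b.2 := stepB_succStm eval beval hab
        exact Relation.ReflTransGen.head h1 ih

lemma mem_compile_CC {C : Cmd Exp BExp} {S : Stm Exp BExp}
    (h : C ∈ compile S) : C ∈ CC C.lbl := by
  simp only [compile, Set.mem_iUnion, Set.mem_setOf_eq] at h
  obtain ⟨S', _, hC⟩ := h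
  rwa [lbl_of_mem_CC hC]

lemma chain_back : ∀ (τ : List ((String → Val) × Cmd Exp BExp)),
    τ.Chain' (Strans eval beval) → (∀ s ∈ τ, s.2 ∈ CC s.2.lbl) →
    (τ.map (fun s => (s.1, s.2.lbl))).Chain' (StepB eval beval)
  | [], _, _ => by exact List.isChain_nil
  | [a], _, _ => by exact List.isChain_singleton _
  | a :: b :: l, hc, hm => by
      replace hc := List.isChain_cons_cons.mp hc
      obtain ⟨hab, hc⟩ := hc
      simp only [List.map_cons, List.Chain', List.isChain_cons_cons]
      refine ⟨?_, ?_⟩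
      · exact strans_stepB eval beval (hm a (by simp)) hab
      · have := chain_back (b :: l) hc (fun s hs => hm s (by simp [hs]))
        simpa [List.Chain'] using this

end Aux

/-- Language compilation preserves the store-sequence abstraction:
α_st(T_GP(S)) = α_st(T^ι(𝒞(S))). -/
theorem compilation_preserves_store_sequences {Val Exp BExp : Type}
    (eval : Exp → (String → Val) → Val) (beval : BExp → (String → Val) → Bool)
    (S : Stm Exp BExp) :
    (fun τ => τ.map Prod.fst) '' TGP eval beval S =
      (fun τ => τ.map Prod.fst) '' Tiota eval beval (compile S) S := by
  apply Set.eq_of_subset_of_subset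
  · rintro x ⟨τ, ⟨hne, ⟨ρ, hhead⟩, hchain⟩, rfl⟩
    refine ⟨τ.map (Cs eval beval), ⟨?_, ?_, ?_, ?_⟩, ?_⟩
    · simp [hne]
    · rintro s hs
      simp only [List.mem_map] at hs
      obtain ⟨a, ha, rfl⟩ := hs
      simp only [compile, Set.mem_iUnion, Set.mem_setOf_eq]
      refine ⟨a.2, chain_reach eval beval τ ρ S hhead hchain a ha, ?_⟩
      have := Cs_mem eval beval a.1 a.2
      simpa using this
    · refine ⟨ρ, (Cs eval beval (ρ, S)).2, ?_, Cs_lbl eval beval (ρ, S)⟩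
      rw [List.head?_map, hhead]
      simp only [Option.map_some]
      congr 1
      exact Prod.ext (Cs_fst eval beval (ρ, S)) rfl
    · exact List.isChain_map_of_isChain _ (fun a b h => stepB_strans eval beval h) hchain
    · simp only [List.map_map]
      congr 1
      funext s
      exact Cs_fst eval beval s
  · rintro x ⟨τ, ⟨hne, hmem, ⟨ρ, C, hhead, hlbl⟩, hchain⟩, rfl⟩
    refine ⟨τ.map (fun s => (s.1, s.2.lbl)), ⟨?_, ?_, ?_⟩, ?_⟩
    · simp [hne]
    · refine ⟨ρ, ?_⟩
      rw [List.head?_map, hhead]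
      simp [hlbl]
    · exact chain_back eval beval τ hchain
        (fun s hs => mem_compile_CC (hmem s hs))
    · simp only [List.map_map]
      rfl
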